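/- arXiv:2511.05288 — 3 statements merged into one kernel-verified Lean document; each statement's English description precedes it below -/
import Mathlib

section
/- Let R = k[x_1,...,x_m] over a field k and let g_1,...,g_m be a homogeneous regular sequence generating an Artinian ideal I. If N is an m×m matrix over R with (g_1,...,g_m)^T = N·(x_1,...,x_m)^T, then the class of det N in R/I is nonzero. -/
open RingTheory.Sequence

section Aux

variable {R : Type*} [CommRing R] {m : ℕ}

/-! ### Syzygies of weakly regular sequences -/

lemma syzygy_mem_span : ∀ (n : ℕ) (g : Fin n → R), IsWeaklyRegular R (List.ofFn g) →
    ∀ (b : Fin n → R), (∑ i, g i * b i = 0) → ∀ i, b i ∈ Ideal.span (Set.range g) := by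
  intro n
  induction n with
  | zero => intro g _ b _ i; exact i.elim0
  | succ n ih =>
    intro g hreg b hb i
    set g' : Fin n → R := fun j => g j.castSucc with hg'
    have hsplit : List.ofFn g = List.ofFn g' ++ [g (Fin.last n)] := by
      rw [List.ofFn_succ' g, List.concat_eq_append]
    have hofList : Ideal.ofList (List.ofFn g') = Ideal.span (Set.range g') := by
      unfold Ideal.ofList
      congr 1
      ext x
      simp [List.mem_ofFn, Set.mem_range]
    rw [hsplit, isWeaklyRegular_append_iff] at hreg
    obtain ⟨hreg', hlast⟩ := hreg
    set p : Submodule R R := Ideal.ofList (List.ofFn g') • ⊤ with hp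
    have hlast' : IsSMulRegular (R ⧸ p) (g (Fin.last n)) := by
      rw [RingTheory.Sequence.isWeaklyRegular_singleton_iff] at hlast
      exact hlast
    have hsub : p = Ideal.span (Set.range g') := by
      rw [hp, smul_eq_mul, Ideal.mul_top, hofList]
    have key : ∀ x : R, g (Fin.last n) * x ∈ Ideal.span (Set.range g') →
        x ∈ Ideal.span (Set.range g') := by
      intro x hx
      have h0 : (g (Fin.last n)) • (Submodule.Quotient.mk x : R ⧸ p) = 0 := by
        rw [← Submodule.Quotient.mk_smul p, smul_eq_mul, Submodule.Quotient.mk_eq_zero, hsub]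
        exact hx
      have h1 : (Submodule.Quotient.mk x : R ⧸ p) = 0 := by
        apply hlast'
        simpa using h0
      rw [Submodule.Quotient.mk_eq_zero, hsub] at h1
      exact h1
    rw [Fin.sum_univ_castSucc] at hb
    have hmem : g (Fin.last n) * b (Fin.last n) ∈ Ideal.span (Set.range g') := by
      have : g (Fin.last n) * b (Fin.last n) = - ∑ j : Fin n, g' j * b j.castSucc := by
        linear_combination hb
      rw [this]
      exact Submodule.neg_mem _ (Ideal.sum_mem _ (fun j _ =>
        Ideal.mul_mem_right _ _ (Ideal.subset_span ⟨j, rfl⟩)))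
    have hblast : b (Fin.last n) ∈ Ideal.span (Set.range g') := key _ hmem
    obtain ⟨e, he⟩ := (Submodule.mem_span_range_iff_exists_fun R).mp hblast
    simp only [smul_eq_mul] at he
    set b' : Fin n → R := fun j => b j.castSucc + e j * g (Fin.last n) with hb'
    have hsyz' : ∑ j, g' j * b' j = 0 := by
      have expand : ∑ j, g' j * b' j
          = (∑ j : Fin n, g' j * b j.castSucc) + (∑ j, e j * g' j) * g (Fin.last n) := by
        rw [Finset.sum_mul, ← Finset.sum_add_distrib]
        congr 1; ext j; ring
      rw [expand, he]
      linear_combination hb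
    have hspan_le : Ideal.span (Set.range g') ≤ Ideal.span (Set.range g) :=
      Ideal.span_mono (Set.range_comp_subset_range _ _)
    have hlast_mem : g (Fin.last n) ∈ Ideal.span (Set.range g) :=
      Ideal.subset_span ⟨Fin.last n, rfl⟩
    refine Fin.lastCases ?_ ?_ i
    · exact hspan_le hblast
    · intro j
      have : b j.castSucc = b' j - e j * g (Fin.last n) := by rw [hb']; ring
      rw [this]
      exact Submodule.sub_mem _ (hspan_le (ih g' hreg' b' hsyz' j))
        (Ideal.mul_mem_left _ _ hlast_mem)

/-! ### Signs and the Koszul contraction -/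

/-- Sign `(-1)^{#{b ∈ S | b < j}}`. -/
def esign (j : Fin m) (S : Finset (Fin m)) : R := (-1) ^ (S.filter (fun b => b < j)).card

/-- Koszul contraction operator on `Finset (Fin m) → R`. -/
def kd (v : Fin m → R) (ω : Finset (Fin m) → R) : Finset (Fin m) → R :=
  fun S => ∑ j ∈ Sᶜ, esign j S * v j * ω (insert j S)

lemma esign_insert_of_lt {j j' : Fin m} (h : j' < j) (S : Finset (Fin m)) :
    (esign j' (insert j S) : R) = esign j' S := by
  unfold esign
  rw [Finset.filter_insert, if_neg (fun hc => absurd (lt_trans h hc) (lt_irrefl _))]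

lemma esign_insert_of_gt {j j' : Fin m} (h : j < j') {S : Finset (Fin m)} (hjS : j ∉ S) :
    (esign j' (insert j S) : R) = - esign j' S := by
  unfold esign
  rw [Finset.filter_insert, if_pos h,
    Finset.card_insert_of_notMem (fun hc => hjS (Finset.mem_filter.mp hc).1), pow_succ]
  ring

lemma esign_mul_esign_insert {j j' : Fin m} (hne : j ≠ j') {S : Finset (Fin m)}
    (hj : j ∉ S) (hj' : j' ∉ S) :
    (esign j S * esign j' (insert j S) : R) = - (esign j' S * esign j (insert j' S)) := by
  rcases lt_or_gt_of_ne hne with h | h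
  · rw [esign_insert_of_gt h hj, esign_insert_of_lt h]
    ring
  · rw [esign_insert_of_lt h, esign_insert_of_gt h hj']
    ring

lemma esign_mul_self (j : Fin m) (S : Finset (Fin m)) : (esign j S : R) * esign j S = 1 := by
  unfold esign
  rw [← mul_pow]
  norm_num

lemma kd_kd (v : Fin m → R) (ω : Finset (Fin m) → R) : kd v (kd v ω) = 0 := by
  funext S
  show ∑ j ∈ Sᶜ, esign j S * v j * kd v ω (insert j S) = 0
  have step : ∀ j ∈ Sᶜ, esign j S * v j * kd v ω (insert j S)
      = ∑ j' ∈ Sᶜ, (if j' ≠ j then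
          esign j S * v j * (esign j' (insert j S) * v j' * ω (insert j' (insert j S))) else 0) := by
    intro j hj
    rw [Finset.sum_ite, Finset.sum_const_zero, add_zero]
    show _ = ∑ j' ∈ Sᶜ.filter (fun j' => j' ≠ j), _
    have : Sᶜ.filter (fun j' => j' ≠ j) = (insert j S)ᶜ := by
      ext a
      simp [Finset.mem_compl, and_comm]
    rw [this]
    unfold kd
    rw [Finset.mul_sum]
  rw [Finset.sum_congr rfl step, ← Finset.sum_product']
  apply Finset.sum_involution (fun p _ => Prod.swap p)
  · intro ⟨j, j'⟩ hp
    by_cases hne : j' = j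
    · subst hne; simp
    · simp only [Prod.swap]
      rw [if_pos hne, if_pos (Ne.symm hne)]
      have hj : j ∉ S := Finset.mem_compl.mp (Finset.mem_product.mp hp).1
      have hj' : j' ∉ S := Finset.mem_compl.mp (Finset.mem_product.mp hp).2
      have hcomm : insert j' (insert j S) = insert j (insert j' S) := Finset.insert_comm _ _ _
      rw [hcomm]
      have := esign_mul_esign_insert (R := R) (Ne.symm hne) hj hj'
      linear_combination (v j * v j' * ω (insert j (insert j' S))) * this
  · intro ⟨j, j'⟩ hp h
    simp only [Prod.swap, Ne, Prod.mk.injEq]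
    intro ⟨h1, h2⟩
    subst h1
    simp at h
  · intro p hp
    simpa [Finset.mem_product, and_comm] using hp
  · intro p hp
    rfl

lemma kd_add (v : Fin m → R) (ω₁ ω₂ : Finset (Fin m) → R) :
    kd v (ω₁ + ω₂) = kd v ω₁ + kd v ω₂ := by
  funext S
  show ∑ j ∈ Sᶜ, esign j S * v j * (ω₁ (insert j S) + ω₂ (insert j S))
      = (∑ j ∈ Sᶜ, esign j S * v j * ω₁ (insert j S))
        + ∑ j ∈ Sᶜ, esign j S * v j * ω₂ (insert j S)
  rw [← Finset.sum_add_distrib]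
  apply Finset.sum_congr rfl
  intro j _
  ring

lemma kd_smul (v : Fin m → R) (a : R) (ω : Finset (Fin m) → R) :
    kd v (a • ω) = a • kd v ω := by
  funext S
  show ∑ j ∈ Sᶜ, esign j S * v j * (a * ω (insert j S)) = a * ∑ j ∈ Sᶜ, _
  rw [Finset.mul_sum]
  apply Finset.sum_congr rfl
  intro j _
  ring

lemma kd_sum (v : Fin m → R) {ι : Type*} (s : Finset ι) (ω : ι → Finset (Fin m) → R) :
    kd v (∑ l ∈ s, ω l) = ∑ l ∈ s, kd v (ω l) := by
  classical
  induction s using Finset.induction_on with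
  | empty =>
    funext S
    show ∑ j ∈ Sᶜ, esign j S * v j * (0 : Finset (Fin m) → R) (insert j S) = _
    simp
  | insert _ _ hns ih =>
    rw [Finset.sum_insert hns, Finset.sum_insert hns, kd_add, ih]

/-! ### Minors -/

variable (N : Matrix (Fin m) (Fin m) R)

def subdet (q : ℕ) (S T : Finset (Fin m)) (hS : S.card = q) (hT : T.card = q) : R :=
  Matrix.det (Matrix.of fun a b : Fin q => N (S.orderEmbOfFin hS a) (T.orderEmbOfFin hT b))

def Fm (S : Finset (Fin m)) : Finset (Fin m) → R :=
  fun T => if h : T.card = S.card then subdet N S.card S T rfl h else 0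

lemma Fm_eq_subdet {q : ℕ} (S T : Finset (Fin m)) (hS : S.card = q) (hT : T.card = q) :
    Fm N S T = subdet N q S T hS hT := by
  subst hS
  unfold Fm
  rw [dif_pos hT]

lemma Fm_eq_zero {S T : Finset (Fin m)} (h : T.card ≠ S.card) : Fm N S T = 0 := by
  unfold Fm; rw [dif_neg h]

lemma Fm_univ_univ : Fm N Finset.univ Finset.univ = N.det := by
  have hcard : (Finset.univ : Finset (Fin m)).card = m := by simp
  rw [Fm_eq_subdet N _ _ hcard hcard]
  unfold subdet
  have hemb : ∀ x : Fin m, (Finset.univ.orderEmbOfFin hcard) x = x := by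
    have hid := Finset.orderEmbOfFin_unique' hcard
      (f := OrderEmbedding.ofStrictMono id strictMono_id) (fun x => Finset.mem_univ _)
    intro x
    have := congrFun (congrArg (fun f => (DFunLike.coe f)) hid) x
    simpa using this.symm
  have : (Matrix.of fun a b : Fin m => N (Finset.univ.orderEmbOfFin hcard a)
      (Finset.univ.orderEmbOfFin hcard b)) = N := by
    ext a b
    rw [Matrix.of_apply, hemb, hemb]
  rw [this]

lemma Fm_empty_empty : Fm N ∅ ∅ = 1 := by
  rw [Fm_eq_subdet N (q := 0) ∅ ∅ rfl rfl]
  unfold subdet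
  exact Matrix.det_fin_zero

/-! ### order embedding helpers -/


lemma filter_lt_orderEmbOfFin (S : Finset (Fin m)) {q : ℕ} (hS : S.card = q) (i : Fin q) :
    S.filter (fun b => b < S.orderEmbOfFin hS i) = (Finset.univ.filter (fun a : Fin q => a < i)).image (S.orderEmbOfFin hS) := by
  ext b
  simp only [Finset.mem_filter, Finset.mem_image, Finset.mem_univ, true_and]
  constructor
  · rintro ⟨hbS, hlt⟩
    obtain ⟨a, ha⟩ : ∃ a, S.orderEmbOfFin hS a = b := by
      have : b ∈ Set.range (S.orderEmbOfFin hS) := by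
        rw [Finset.range_orderEmbOfFin]; exact hbS
      exact this
    exact ⟨a, by rwa [← ha, OrderEmbedding.lt_iff_lt] at hlt, ha⟩
  · rintro ⟨a, hai, rfl⟩
    exact ⟨Finset.orderEmbOfFin_mem S hS a, by rwa [OrderEmbedding.lt_iff_lt]⟩

lemma card_filter_lt_orderEmbOfFin (S : Finset (Fin m)) {q : ℕ} (hS : S.card = q) (i : Fin q) :
    (S.filter (fun b => b < S.orderEmbOfFin hS i)).card = i := by
  rw [filter_lt_orderEmbOfFin S hS i,
    Finset.card_image_of_injective _ (S.orderEmbOfFin hS).injective,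
    show Finset.univ.filter (fun a : Fin q => a < i) = Finset.Iio i by ext a; simp,
    Fin.card_Iio]

lemma orderEmbOfFin_erase (S : Finset (Fin m)) {q : ℕ} (hS : S.card = q + 1) (i : Fin (q + 1))
    (a : Fin q) :
    (S.erase (S.orderEmbOfFin hS i)).orderEmbOfFin
        (by rw [Finset.card_erase_of_mem (Finset.orderEmbOfFin_mem S hS i), hS]; rfl) a
      = S.orderEmbOfFin hS (i.succAbove a) := by
  have h' : (S.erase (S.orderEmbOfFin hS i)).card = q := by
    rw [Finset.card_erase_of_mem (Finset.orderEmbOfFin_mem S hS i), hS]; rfl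
  have key : (Fin.succAboveOrderEmb i).trans (S.orderEmbOfFin hS)
      = (S.erase (S.orderEmbOfFin hS i)).orderEmbOfFin h' := by
    apply Finset.orderEmbOfFin_unique' h'
    intro x
    show S.orderEmbOfFin hS (i.succAbove x) ∈ _
    rw [Finset.mem_erase]
    exact ⟨fun hc => (Fin.succAbove_ne i x) ((S.orderEmbOfFin hS).injective hc),
      Finset.orderEmbOfFin_mem S hS _⟩
  have := congrFun (congrArg (fun f => (DFunLike.coe f)) key) a
  simpa using this.symm

lemma neg_one_shuffle (a : R) (p i : ℕ) : (-1 : R) ^ p * ((-1) ^ (i + p) * a) = (-1) ^ i * a := by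
  have h2 : (-1 : R) ^ p * (-1) ^ p = 1 := by rw [← mul_pow]; norm_num
  calc (-1 : R) ^ p * ((-1) ^ (i + p) * a) = ((-1) ^ p * (-1) ^ p) * ((-1) ^ i * a) := by
        rw [pow_add]; ring
    _ = (-1) ^ i * a := by rw [h2, one_mul]

lemma laplace {q : ℕ} (S U : Finset (Fin m)) (hS : S.card = q + 1) (hU : U.card = q)
    (j : Fin m) :
    ∑ s ∈ S, (esign s S : R) * N s j * Fm N (S.erase s) U
      = if j ∈ U then 0 else esign j U * Fm N S (insert j U) := by
  classical
  have hposlt : (U.filter (fun b => b < j)).card < q + 1 :=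
    Nat.lt_succ_of_le (le_of_le_of_eq (Finset.card_filter_le _ _) hU)
  set pos : Fin (q + 1) := ⟨(U.filter (fun b => b < j)).card, hposlt⟩ with hpos
  set ψ : Fin (q + 1) → Fin m := pos.insertNth j (U.orderEmbOfFin hU) with hψ
  set M : Matrix (Fin (q + 1)) (Fin (q + 1)) R :=
    Matrix.of (fun a b => N (S.orderEmbOfFin hS a) (ψ b)) with hM
  have herase : ∀ i : Fin (q + 1), (S.erase (S.orderEmbOfFin hS i)).card = q := by
    intro i
    rw [Finset.card_erase_of_mem (Finset.orderEmbOfFin_mem S hS i), hS]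
    omega
  -- each summand over S rewritten via the enumeration of S
  have hLHS : ∑ s ∈ S, (esign s S : R) * N s j * Fm N (S.erase s) U
      = ∑ i : Fin (q + 1), (-1 : R) ^ (i : ℕ) * N (S.orderEmbOfFin hS i) j
          * subdet N q (S.erase (S.orderEmbOfFin hS i)) U (herase i) hU := by
    refine (Finset.sum_bij (fun (a : Fin (q + 1)) _ => S.orderEmbOfFin hS a)
      (fun a _ => Finset.orderEmbOfFin_mem S hS a)
      (fun a _ b _ h => (S.orderEmbOfFin hS).injective h)
      (fun s hs => ?_) (fun a _ => ?_)).symm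
    · have : s ∈ Set.range (S.orderEmbOfFin hS) := by rw [Finset.range_orderEmbOfFin]; exact hs
      obtain ⟨a, ha⟩ := this
      exact ⟨a, Finset.mem_univ a, ha⟩
    · rw [Fm_eq_subdet N _ _ (herase a) hU]
      congr 2
      unfold esign
      rw [card_filter_lt_orderEmbOfFin S hS a]
  -- column expansion of det M
  have hsub : ∀ i : Fin (q + 1), (M.submatrix i.succAbove pos.succAbove).det
      = subdet N q (S.erase (S.orderEmbOfFin hS i)) U (herase i) hU := by
    intro i
    unfold subdet
    congr 1
    funext a b
    simp only [hM, hψ, Matrix.submatrix_apply, Matrix.of_apply, Fin.insertNth_apply_succAbove]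
    rw [← orderEmbOfFin_erase S hS i a]
  have hdet : M.det = ∑ i : Fin (q + 1), (-1 : R) ^ ((i : ℕ) + (pos : ℕ)) * N (S.orderEmbOfFin hS i) j
      * subdet N q (S.erase (S.orderEmbOfFin hS i)) U (herase i) hU := by
    rw [Matrix.det_succ_column M pos]
    apply Finset.sum_congr rfl
    intro i _
    rw [hsub i]
    congr 2
    simp only [hM, hψ, Matrix.of_apply, Fin.insertNth_apply_same]
  have hLHS' : ∑ s ∈ S, (esign s S : R) * N s j * Fm N (S.erase s) U
      = (-1 : R) ^ (pos : ℕ) * M.det := by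
    rw [hdet, hLHS, Finset.mul_sum]
    apply Finset.sum_congr rfl
    intro i _
    rw [mul_assoc ((-1 : R) ^ ((i : ℕ) + (pos : ℕ))), mul_assoc ((-1 : R) ^ (i : ℕ)),
      neg_one_shuffle]
  rw [hLHS']
  by_cases hjU : j ∈ U
  · rw [if_pos hjU]
    obtain ⟨a0, ha0⟩ : ∃ a0, U.orderEmbOfFin hU a0 = j := by
      have : j ∈ Set.range (U.orderEmbOfFin hU) := by rw [Finset.range_orderEmbOfFin]; exact hjU
      exact this
    have : M.det = 0 := by
      apply Matrix.det_zero_of_column_eq (i := pos) (j := pos.succAbove a0)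
        (Fin.ne_succAbove pos a0)
      intro r
      simp only [hM, hψ, Matrix.of_apply, Fin.insertNth_apply_same,
        Fin.insertNth_apply_succAbove, ha0]
    rw [this, mul_zero]
  · rw [if_neg hjU]
    have hcard : (insert j U).card = q + 1 := by
      rw [Finset.card_insert_of_notMem hjU, hU]
    rw [Fm_eq_subdet N _ _ hS hcard]
    -- ψ is the monotone enumeration of insert j U
    -- key: value comparison
    have hvlt : ∀ b : Fin q, U.orderEmbOfFin hU b < j ↔ (b : ℕ) < (pos : ℕ) := by
      intro b
      constructor
      · intro hb
        have hsubset : (Finset.univ.filter (fun a : Fin q => a ≤ b)).image (U.orderEmbOfFin hU)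
            ⊆ U.filter (fun u => u < j) := by
          intro u hu
          simp only [Finset.mem_image, Finset.mem_filter, Finset.mem_univ, true_and] at hu ⊢
          obtain ⟨a, hab, rfl⟩ := hu
          exact ⟨Finset.orderEmbOfFin_mem U hU a,
            lt_of_le_of_lt ((U.orderEmbOfFin hU).monotone hab) hb⟩
        have := Finset.card_le_card hsubset
        rw [Finset.card_image_of_injective _ (U.orderEmbOfFin hU).injective,
          show Finset.univ.filter (fun a : Fin q => a ≤ b) = Finset.Iic b by ext a; simp,
          Fin.card_Iic] at this
        exact Nat.lt_of_succ_le this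
      · intro hb
        by_contra hc
        push_neg at hc
        have hsubset : U.filter (fun u => u < j)
            ⊆ (Finset.univ.filter (fun a : Fin q => a < b)).image (U.orderEmbOfFin hU) := by
          intro u hu
          simp only [Finset.mem_filter] at hu
          obtain ⟨a, rfl⟩ : ∃ a, U.orderEmbOfFin hU a = u := by
            have : u ∈ Set.range (U.orderEmbOfFin hU) := by
              rw [Finset.range_orderEmbOfFin]; exact hu.1
            exact this
          simp only [Finset.mem_image, Finset.mem_filter, Finset.mem_univ, true_and]
          refine ⟨a, ?_, rfl⟩
          by_contra hab
          push_neg at hab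
          exact absurd (lt_of_le_of_lt ((U.orderEmbOfFin hU).monotone hab) hu.2)
            (not_lt.mpr hc)
        have := Finset.card_le_card hsubset
        rw [Finset.card_image_of_injective _ (U.orderEmbOfFin hU).injective,
          show Finset.univ.filter (fun a : Fin q => a < b) = Finset.Iio b by ext a; simp,
          Fin.card_Iio] at this
        exact absurd hb (not_lt.mpr this)
    have hstrict : StrictMono ψ := by
      intro x y hxy
      rcases eq_or_ne x pos with rfl | hx
      · rcases eq_or_ne y pos with rfl | hy
        · exact absurd hxy (lt_irrefl _)
        · obtain ⟨c, rfl⟩ := Fin.exists_succAbove_eq (Ne.symm hy).symm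
          simp only [hψ, Fin.insertNth_apply_same, Fin.insertNth_apply_succAbove]
          -- pos < pos.succAbove c ⇒ pos ≤ c as ℕ
          have hpc : ¬ ((c : ℕ) < (pos : ℕ)) := by
            intro hcp
            have : (pos.succAbove c : ℕ) ≤ (pos : ℕ) := by
              rw [Fin.succAbove_of_castSucc_lt pos c (by exact hcp)]
              exact le_of_lt hcp
            exact absurd hxy (not_lt.mpr (by exact_mod_cast this))
          have := (not_iff_not.mpr (hvlt c)).mpr hpc
          push_neg at this
          rcases lt_or_eq_of_le this with h | h
          · exact h
          · exact absurd h.symm (by intro hh; exact hjU (hh ▸ Finset.orderEmbOfFin_mem U hU c))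
      · obtain ⟨c, rfl⟩ := Fin.exists_succAbove_eq (Ne.symm hx).symm
        rcases eq_or_ne y pos with rfl | hy
        · simp only [hψ, Fin.insertNth_apply_same, Fin.insertNth_apply_succAbove]
          have hcp : (c : ℕ) < (pos : ℕ) := by
            by_contra hcp
            push_neg at hcp
            have : (pos : ℕ) < (pos.succAbove c : ℕ) := by
              rw [Fin.succAbove_of_le_castSucc pos c (by exact hcp)]
              exact Nat.lt_succ_of_le hcp
            exact absurd hxy (not_lt.mpr (by exact_mod_cast le_of_lt this))
          exact (hvlt c).mpr hcp
        · obtain ⟨c', rfl⟩ := Fin.exists_succAbove_eq (Ne.symm hy).symm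
          simp only [hψ, Fin.insertNth_apply_succAbove]
          exact (U.orderEmbOfFin hU).strictMono (Fin.succAbove_lt_succAbove_iff.mp hxy)
    have hmem : ∀ x, ψ x ∈ insert j U := by
      intro x
      rcases eq_or_ne x pos with rfl | hx
      · simp only [hψ, Fin.insertNth_apply_same]
        exact Finset.mem_insert_self _ _
      · obtain ⟨c, rfl⟩ := Fin.exists_succAbove_eq (Ne.symm hx).symm
        simp only [hψ, Fin.insertNth_apply_succAbove]
        exact Finset.mem_insert_of_mem (Finset.orderEmbOfFin_mem U hU c)
    have hψeq : ∀ x, ψ x = (insert j U).orderEmbOfFin hcard x := by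
      have := Finset.orderEmbOfFin_unique' hcard
        (f := OrderEmbedding.ofStrictMono ψ hstrict) hmem
      intro x
      exact congrFun (congrArg (fun f => (DFunLike.coe f)) this) x
    have hMdet : M.det = subdet N (q + 1) S (insert j U) hS hcard := by
      unfold subdet
      congr 1
      funext a b
      simp only [hM, Matrix.of_apply]
      rw [hψeq b]
    rw [hMdet]
    show ((-1 : R) ^ ((Finset.filter (fun b => b < j) U).card)) * _ = ((-1 : R) ^ ((Finset.filter (fun b => b < j) U).card)) * _
    rfl

lemma kd_Fm (v : Fin m → R) (S : Finset (Fin m)) :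
    kd v (Fm N S) = fun U => ∑ s ∈ S, esign s S * (∑ j, N s j * v j) * Fm N (S.erase s) U := by
  funext U
  by_cases hc : U.card + 1 = S.card
  · have hS : S.card = U.card + 1 := hc.symm
    have hU : U.card = U.card := rfl
    calc kd v (Fm N S) U = ∑ j ∈ Uᶜ, esign j U * v j * Fm N S (insert j U) := rfl
      _ = ∑ j : Fin m, v j * (if j ∈ U then 0 else esign j U * Fm N S (insert j U)) := by
          rw [← Finset.sum_compl_add_sum U (fun j => v j * (if j ∈ U then 0
            else esign j U * Fm N S (insert j U)))]
          have h2 : ∑ j ∈ U, v j * (if j ∈ U then (0:R) else esign j U * Fm N S (insert j U)) = 0 := by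
            apply Finset.sum_eq_zero
            intro j hj
            rw [if_pos hj, mul_zero]
          rw [h2, add_zero]
          apply Finset.sum_congr rfl
          intro j hj
          rw [if_neg (Finset.mem_compl.mp hj)]
          ring
      _ = ∑ j : Fin m, v j * ∑ s ∈ S, esign s S * N s j * Fm N (S.erase s) U := by
          apply Finset.sum_congr rfl
          intro j _
          rw [laplace N S U hS hU j]
      _ = ∑ j : Fin m, ∑ s ∈ S, v j * (esign s S * N s j * Fm N (S.erase s) U) := by
          apply Finset.sum_congr rfl
          intro j _
          rw [Finset.mul_sum]
      _ = ∑ s ∈ S, ∑ j : Fin m, v j * (esign s S * N s j * Fm N (S.erase s) U) :=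
          Finset.sum_comm
      _ = ∑ s ∈ S, esign s S * (∑ j, N s j * v j) * Fm N (S.erase s) U := by
          apply Finset.sum_congr rfl
          intro s _
          rw [Finset.mul_sum, Finset.sum_mul]
          apply Finset.sum_congr rfl
          intro j _
          ring
  · have hL : kd v (Fm N S) U = 0 := by
      apply Finset.sum_eq_zero
      intro j hj
      rw [Fm_eq_zero N (by rw [Finset.card_insert_of_notMem (Finset.mem_compl.mp hj)]; exact hc),
        mul_zero]
    rw [hL]
    symm
    apply Finset.sum_eq_zero
    intro s hs
    have : U.card ≠ (S.erase s).card := by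
      rw [Finset.card_erase_of_mem hs]
      intro h
      apply hc
      have hpos : 1 ≤ S.card := Finset.card_pos.mpr ⟨s, hs⟩
      omega
    rw [Fm_eq_zero N this, mul_zero]

/-! ### flags -/

def flag (m q : ℕ) : Finset (Fin m) := Finset.univ.filter (fun i => (i : ℕ) < q)

lemma flag_self : flag m m = Finset.univ := by
  unfold flag
  ext i
  simp [i.isLt]

lemma flag_zero : flag m 0 = ∅ := by
  unfold flag
  ext i
  simp

lemma mem_flag_succ {q : ℕ} (hq : q < m) : (⟨q, hq⟩ : Fin m) ∈ flag m (q + 1) := by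
  unfold flag
  simp

lemma flag_succ_erase {q : ℕ} (hq : q < m) :
    (flag m (q + 1)).erase ⟨q, hq⟩ = flag m q := by
  unfold flag
  ext i
  simp only [Finset.mem_erase, Finset.mem_filter, Finset.mem_univ, true_and, Ne,
    Fin.ext_iff]
  omega

end Aux

open MvPolynomial

/-- the class of `det N` in `R/I` is nonzero, where
`(g_1,…,g_m)^T = N·(x_1,…,x_m)^T`. -/
theorem det_class_ne_zero {k : Type*} [Field k] {m : ℕ}
    (g : Fin m → MvPolynomial (Fin m) k) (d : Fin m → ℕ)
    (hhom : ∀ i, (g i).IsHomogeneous (d i)) (hd : ∀ i, 0 < d i)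
    (hreg : RingTheory.Sequence.IsRegular (MvPolynomial (Fin m) k) (List.ofFn g))
    (I : Ideal (MvPolynomial (Fin m) k)) (hI : I = Ideal.span (Set.range g))
    (hart : IsArtinianRing (MvPolynomial (Fin m) k ⧸ I))
    (N : Matrix (Fin m) (Fin m) (MvPolynomial (Fin m) k))
    (hN : ∀ i, g i = ∑ j, N i j * X j) :
    Ideal.Quotient.mk I N.det ≠ 0 := by
  classical
  intro h0
  have hdetI : N.det ∈ I := by
    rwa [← Ideal.Quotient.eq_zero_iff_mem]
  rw [hI] at hdetI
  obtain ⟨p, hp⟩ := (Submodule.mem_span_range_iff_exists_fun (MvPolynomial (Fin m) k)).mp hdetI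
  simp only [smul_eq_mul] at hp
  have hw : IsWeaklyRegular (MvPolynomial (Fin m) k) (List.ofFn g) := hreg.toIsWeaklyRegular
  set v : Fin m → (MvPolynomial (Fin m) k) := fun j => X j with hv
  -- descending staircase
  have key : ∀ t, t ≤ m → ∃ (P : Finset (Fin m) → (MvPolynomial (Fin m) k)) (c : Fin m → Finset (Fin m) → (MvPolynomial (Fin m) k)),
      Fm N (flag m (m - t)) = kd v P + ∑ l, (g l) • (c l) := by
    intro t
    induction t with
    | zero =>
      intro _
      refine ⟨0, fun l => fun T => if T = Finset.univ then p l else 0, ?_⟩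
      rw [Nat.sub_zero, flag_self]
      funext T
      have hkd0 : kd v (0 : Finset (Fin m) → (MvPolynomial (Fin m) k)) T = 0 := by
        show ∑ j ∈ Tᶜ, esign j T * v j * (0 : Finset (Fin m) → (MvPolynomial (Fin m) k)) (insert j T) = 0
        simp
      rw [Pi.add_apply, hkd0, zero_add, Finset.sum_apply]
      by_cases hT : T = Finset.univ
      · subst hT
        rw [Fm_univ_univ]
        rw [← hp]
        apply Finset.sum_congr rfl
        intro l _
        rw [Pi.smul_apply, smul_eq_mul]
        show p l * g l = g l * (if (Finset.univ : Finset (Fin m)) = Finset.univ then p l else 0)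
        rw [if_pos rfl]
        ring
      · have hcard : T.card ≠ (Finset.univ : Finset (Fin m)).card := by
          intro hc
          exact hT (Finset.eq_univ_of_card T (by rw [hc, Finset.card_univ]))
        rw [Fm_eq_zero N hcard]
        symm
        apply Finset.sum_eq_zero
        intro l _
        rw [Pi.smul_apply, smul_eq_mul]
        show g l * (if T = Finset.univ then p l else 0) = 0
        rw [if_neg hT, mul_zero]
    | succ t ih =>
      intro ht
      obtain ⟨P, c, hPc⟩ := ih (Nat.le_of_succ_le ht)
      set q : ℕ := m - (t + 1) with hqdef
      have hmq : m - t = q + 1 := by omega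
      rw [hmq] at hPc
      have hqm : q < m := by omega
      set l0 : Fin m := ⟨q, hqm⟩ with hl0
      set S : Finset (Fin m) := flag m (q + 1) with hSdef
      have hl0S : l0 ∈ S := mem_flag_succ hqm
      have hSer : S.erase l0 = flag m q := flag_succ_erase hqm
      -- apply the contraction to both sides
      have h1 : kd v (Fm N S) = ∑ l, (g l) • kd v (c l) := by
        rw [hPc, kd_add, kd_kd, zero_add, kd_sum]
        apply Finset.sum_congr rfl
        intro l _
        rw [kd_smul]
      have h2 : (fun U => ∑ s ∈ S, esign s S * g s * Fm N (S.erase s) U)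
          = ∑ l, (g l) • kd v (c l) := by
        rw [← h1, kd_Fm]
        funext U
        apply Finset.sum_congr rfl
        intro s _
        rw [← hN s]
      -- syzygy relation
      have h3 : ∀ U, ∑ l : Fin m,
          g l * ((if l ∈ S then esign l S * Fm N (S.erase l) U else 0) - kd v (c l) U) = 0 := by
        intro U
        have e1 := congrFun h2 U
        have eL : ∑ s ∈ S, esign s S * g s * Fm N (S.erase s) U
            = ∑ l : Fin m, g l * (if l ∈ S then esign l S * Fm N (S.erase l) U else 0) := by
          calc ∑ s ∈ S, esign s S * g s * Fm N (S.erase s) U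
              = ∑ s ∈ S, g s * (esign s S * Fm N (S.erase s) U) := by
                apply Finset.sum_congr rfl
                intro s _
                ring
            _ = ∑ l ∈ Finset.univ ∩ S, g l * (esign l S * Fm N (S.erase l) U) := by
                rw [Finset.univ_inter]
            _ = ∑ l : Fin m, if l ∈ S then g l * (esign l S * Fm N (S.erase l) U) else 0 :=
                (Finset.sum_ite_mem _ _ _).symm
            _ = ∑ l : Fin m, g l * (if l ∈ S then esign l S * Fm N (S.erase l) U else 0) := by
                apply Finset.sum_congr rfl
                intro l _
                by_cases hl : l ∈ S
                · rw [if_pos hl, if_pos hl]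
                · rw [if_neg hl, if_neg hl, mul_zero]
        have eR : (∑ l, (g l) • kd v (c l)) U = ∑ l : Fin m, g l * kd v (c l) U := by
          rw [Finset.sum_apply]
          apply Finset.sum_congr rfl
          intro l _
          rw [Pi.smul_apply, smul_eq_mul]
        rw [eL, eR] at e1
        calc ∑ l : Fin m, g l * ((if l ∈ S then esign l S * Fm N (S.erase l) U else 0)
                - kd v (c l) U)
            = (∑ l : Fin m, g l * (if l ∈ S then esign l S * Fm N (S.erase l) U else 0))
              - ∑ l : Fin m, g l * kd v (c l) U := by
              rw [← Finset.sum_sub_distrib]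
              apply Finset.sum_congr rfl
              intro l _
              ring
          _ = 0 := by rw [← e1, sub_self]
      have h4 : ∀ U, ((if l0 ∈ S then esign l0 S * Fm N (S.erase l0) U else 0) - kd v (c l0) U)
          ∈ Ideal.span (Set.range g) := by
        intro U
        exact syzygy_mem_span m g hw _ (h3 U) l0
      have h5 : ∀ U : Finset (Fin m), ∃ e : Fin m → (MvPolynomial (Fin m) k),
          ∑ t', e t' * g t' = esign l0 S * Fm N (flag m q) U - kd v (c l0) U := by
        intro U
        obtain ⟨e, he⟩ := (Submodule.mem_span_range_iff_exists_fun (MvPolynomial (Fin m) k)).mp (h4 U)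
        refine ⟨e, ?_⟩
        simp only [smul_eq_mul] at he
        rw [he, if_pos hl0S, hSer]
      choose γ hγ using h5
      refine ⟨(esign l0 S : MvPolynomial (Fin m) k) • c l0, fun t' => fun U => esign l0 S * γ U t', ?_⟩
      funext U
      rw [Pi.add_apply, kd_smul, Pi.smul_apply, smul_eq_mul, Finset.sum_apply]
      have hsum : ∑ l : Fin m, ((g l) • fun U => esign l0 S * γ U l) U
          = esign l0 S * ∑ t', γ U t' * g t' := by
        rw [Finset.mul_sum]
        apply Finset.sum_congr rfl
        intro l _
        rw [Pi.smul_apply, smul_eq_mul]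
        ring
      rw [hsum]
      have hsq : (esign l0 S : (MvPolynomial (Fin m) k)) * esign l0 S = 1 := esign_mul_self l0 S
      linear_combination (- (esign l0 S : (MvPolynomial (Fin m) k))) * (hγ U) - (Fm N (flag m q) U) * hsq
  -- endgame
  obtain ⟨P, c, hPc⟩ := key m le_rfl
  rw [Nat.sub_self, flag_zero] at hPc
  have hval := congrFun hPc ∅
  rw [Fm_empty_empty, Pi.add_apply, Finset.sum_apply] at hval
  -- apply constantCoeff
  have hcc := congrArg (MvPolynomial.constantCoeff (σ := Fin m) (R := k)) hval
  rw [map_one, map_add] at hcc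
  have hkd : MvPolynomial.constantCoeff (kd v P ∅) = 0 := by
    show MvPolynomial.constantCoeff (∑ j ∈ (∅ : Finset (Fin m))ᶜ,
      esign j ∅ * v j * P (insert j ∅)) = 0
    rw [map_sum]
    apply Finset.sum_eq_zero
    intro j _
    rw [map_mul, map_mul]
    have : MvPolynomial.constantCoeff (v j) = 0 := by
      rw [hv]
      simp
    rw [this]
    ring
  have hg0 : ∀ l, MvPolynomial.constantCoeff (g l) = 0 := by
    intro l
    rw [hN l, map_sum]
    apply Finset.sum_eq_zero
    intro j _
    rw [map_mul]
    have : MvPolynomial.constantCoeff (X j : MvPolynomial (Fin m) k) = 0 := by simp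
    rw [this, mul_zero]
  have hsum0 : MvPolynomial.constantCoeff (∑ l : Fin m, ((g l) • c l) ∅) = 0 := by
    rw [map_sum]
    apply Finset.sum_eq_zero
    intro l _
    rw [Pi.smul_apply, smul_eq_mul, map_mul, hg0 l, zero_mul]
  rw [hkd, hsum0, add_zero] at hcc
  exact one_ne_zero hcc
end

section
/- Let k be a field of characteristic p > 0, R = k[x_1,...,x_m], g_1,...,g_m a homogeneous regular sequence in R_+ generating an Artinian ideal, and N an m×m matrix over R with (g_1,...,g_m)^T = N·(x_1,...,x_m)^T. Set z_0 = det N. Then g_1^{p-1}···g_m^{p-1}·z_0 − x_1^{p-1}···x_m^{p-1}·z_0^p lies in the ideal (g_1^p,...,g_m^p). -/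
open MvPolynomial

section MatrixLemmas

open Matrix Finset

variable {Q : Type*} [CommRing Q] {m : ℕ}

private lemma sum_skew_zero {M : Type*} [AddCommMonoid M] (F : Fin m → Fin m → M)
    (h : ∀ j k, F j k + F k j = 0) (hd : ∀ j, F j j = 0) :
    ∑ j, ∑ k, F j k = 0 := by
  rw [← Finset.sum_product']
  refine Finset.sum_involution (fun a _ => a.swap) ?_ ?_ (fun a ha => Finset.mem_univ _) ?_
  · intro a _
    exact h a.1 a.2
  · intro a _ hF hs
    apply hF
    have h2 : a.2 = a.1 := by
      have := congrArg Prod.fst hs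
      simpa [Prod.swap] using this
    show F a.1 a.2 = 0
    rw [h2, hd]
  · intro a _
    simp

private lemma updateRow_twice (A : Matrix (Fin m) (Fin m) Q) (r : Fin m) (u v : Fin m → Q) :
    (A.updateRow r u).updateRow r v = A.updateRow r v := by
  ext i l
  by_cases hi : i = r
  · subst hi; simp [Matrix.updateRow_self]
  · simp [Matrix.updateRow_ne hi]

private lemma det_updateRow_expand_aux (A : Matrix (Fin m) (Fin m) Q) (r : Fin m)
    (w : Fin m → Q) (s : Finset (Fin m)) :
    (A.updateRow r (∑ j ∈ s, Pi.single j (w j))).det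
      = ∑ j ∈ s, w j * (A.updateRow r (Pi.single j 1)).det := by
  induction s using Finset.induction with
  | empty =>
      simp only [Finset.sum_empty]
      exact Matrix.det_eq_zero_of_row_eq_zero r (by simp)
  | insert a s hnot ih =>
      have h : Pi.single a (w a) = w a • (Pi.single a (1 : Q) : Fin m → Q) := by
        funext l
        by_cases hl : l = a
        · subst hl; simp
        · simp [Pi.single_apply, hl]
      rw [Finset.sum_insert hnot, Matrix.det_updateRow_add, ih, Finset.sum_insert hnot, h,
        Matrix.det_updateRow_smul]

private lemma det_updateRow_expand (A : Matrix (Fin m) (Fin m) Q) (r : Fin m) (w : Fin m → Q) :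
    (A.updateRow r w).det = ∑ j, w j * (A.updateRow r (Pi.single j 1)).det := by
  conv_lhs => rw [← Finset.univ_sum_single w]
  exact det_updateRow_expand_aux A r w Finset.univ

private lemma key_id (A : Matrix (Fin m) (Fin m) Q) (x : Fin m → Q) (hAx : A *ᵥ x = 0)
    (r j k : Fin m) :
    x k * (A.updateRow r (Pi.single j 1)).det
      = x j * (A.updateRow r (Pi.single k 1)).det := by
  set U := A.updateRow r (Pi.single j 1) with hU
  have hUx : U *ᵥ x = Pi.single r (x j) := by
    funext i
    by_cases hi : i = r
    · subst hi
      simp [U, Matrix.mulVec, Matrix.updateRow_self, single_dotProduct]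
    · have h : U i = A i := Matrix.updateRow_ne hi
      simp only [Matrix.mulVec, h, Pi.single_apply, if_neg hi]
      have := congrFun hAx i
      simpa [Matrix.mulVec] using this
  have h1 : U.adjugate *ᵥ (U *ᵥ x) = U.det • x := by
    rw [Matrix.mulVec_mulVec, Matrix.adjugate_mul, Matrix.smul_mulVec, Matrix.one_mulVec]
  rw [hUx, Matrix.mulVec_single] at h1
  have h2 := congrFun h1 k
  simp only [Pi.smul_apply, smul_eq_mul, op_smul_eq_mul, Matrix.col_apply] at h2
  have h3 : U.adjugate k r = (A.updateRow r (Pi.single k 1)).det := by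
    rw [Matrix.adjugate_apply, hU, updateRow_twice]
  rw [h3] at h2
  rw [mul_comm (x k) _, ← h2, mul_comm]

private lemma det_updateRow_syzygy (A : Matrix (Fin m) (Fin m) Q) (x : Fin m → Q)
    (hAx : A *ᵥ x = 0) (r : Fin m) (E : Matrix (Fin m) (Fin m) Q)
    (hskew : ∀ j k, E j k + E k j = 0) (hdiag : ∀ j, E j j = 0) :
    (A.updateRow r (fun j => ∑ k, E j k * x k)).det = 0 := by
  rw [det_updateRow_expand]
  have : ∀ j, (∑ k, E j k * x k) * (A.updateRow r (Pi.single j 1)).det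
      = ∑ k, E j k * (x k * (A.updateRow r (Pi.single j 1)).det) := by
    intro j; rw [Finset.sum_mul]; exact Finset.sum_congr rfl (fun k _ => by ring)
  rw [Finset.sum_congr rfl (fun j _ => this j)]
  refine sum_skew_zero (fun j k => E j k * (x k * (A.updateRow r (Pi.single j 1)).det)) ?_ ?_
  · intro j k
    show E j k * (x k * (A.updateRow r (Pi.single j 1)).det)
        + E k j * (x j * (A.updateRow r (Pi.single k 1)).det) = 0
    rw [key_id A x hAx r j k]
    have h2 : E k j = - E j k := by linear_combination hskew j k
    rw [h2]; ring
  · intro j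
    show E j j * (x j * (A.updateRow r (Pi.single j 1)).det) = 0
    rw [hdiag]; ring

private lemma det_eq_det_of_rows_syzygy (B C : Matrix (Fin m) (Fin m) Q) (x : Fin m → Q)
    (hB : B *ᵥ x = 0) (hC : C *ᵥ x = 0)
    (hE : ∀ i, ∃ E : Matrix (Fin m) (Fin m) Q, (∀ j k, E j k + E k j = 0) ∧ (∀ j, E j j = 0)
      ∧ (∀ j, B i j - C i j = ∑ k, E j k * x k)) :
    B.det = C.det := by
  set mix : ℕ → Matrix (Fin m) (Fin m) Q :=
    fun t => Matrix.of (fun i j => if (i : ℕ) < t then C i j else B i j) with hmix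
  have hmix0 : mix 0 = B := by ext i j; simp [hmix]
  have hmixm : mix m = C := by ext i j; simp [hmix, i.isLt]
  have hmixvec : ∀ t, mix t *ᵥ x = 0 := by
    intro t; funext i
    by_cases hi : (i : ℕ) < t
    · have : (mix t) i = C i := by funext j; simp [hmix, hi]
      rw [Matrix.mulVec, this]
      exact congrFun hC i
    · have : (mix t) i = B i := by funext j; simp [hmix, hi]
      rw [Matrix.mulVec, this]
      exact congrFun hB i
  have step : ∀ t, (mix t).det = (mix (t+1)).det := by
    intro t
    by_cases ht : t < m
    · set r : Fin m := ⟨t, ht⟩ with hr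
      have e1 : mix t = (mix t).updateRow r (B r) := by
        ext i j
        by_cases hi : i = r
        · subst hi; simp [hmix, Matrix.updateRow_self, hr]
        · rw [Matrix.updateRow_ne hi]
      have e2 : mix (t+1) = (mix t).updateRow r (C r) := by
        ext i j
        by_cases hi : i = r
        · subst hi; simp [hmix, Matrix.updateRow_self, hr]
        · rw [Matrix.updateRow_ne hi]
          have : ((i : ℕ) < t + 1) = ((i : ℕ) < t) := by
            have hne : (i : ℕ) ≠ t := fun hc => hi (Fin.ext hc)
            simp only [eq_iff_iff]
            omega
          simp [hmix, this]
      obtain ⟨E, hs, hd, hrow⟩ := hE r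
      have key := det_updateRow_syzygy (mix t) x (hmixvec t) r E hs hd
      have hwrow : (fun j => ∑ k, E j k * x k) = B r - C r := by
        funext j; rw [← hrow j]; simp
      rw [hwrow] at key
      have hmain : ((mix t).updateRow r (B r)).det = ((mix t).updateRow r (C r)).det := by
        have hadd := Matrix.det_updateRow_add (mix t) r (B r - C r) (C r)
        simp only [sub_add_cancel] at hadd
        rw [hadd, key, zero_add]
      calc (mix t).det = ((mix t).updateRow r (B r)).det := by rw [← e1]
        _ = ((mix t).updateRow r (C r)).det := hmain
        _ = (mix (t+1)).det := by rw [← e2]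
    · have : mix (t+1) = mix t := by
        ext i j
        have : (i:ℕ) < t := lt_of_lt_of_le i.isLt (le_of_not_gt ht)
        simp [hmix, this, Nat.lt_succ_of_lt this]
      rw [this]
  have hall : ∀ t, B.det = (mix t).det := by
    intro t; induction t with
    | zero => rw [hmix0]
    | succ n ih => rw [ih, step n]
  rw [hall m, hmixm]

end MatrixLemmas

section Syzygy

variable {K : Type*} [Field K]

private noncomputable def killLast (m : ℕ) :
    MvPolynomial (Fin (m+1)) K →ₐ[K] MvPolynomial (Fin m) K :=
  aeval (fun i : Fin (m+1) => Fin.lastCases 0 (fun j => X j) i)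

private lemma killLast_rename (m : ℕ) (P : MvPolynomial (Fin m) K) :
    killLast m (rename Fin.castSucc P) = P := by
  rw [killLast, aeval_rename]
  have : ((fun i : Fin (m+1) => Fin.lastCases (motive := fun _ => MvPolynomial (Fin m) K)
      0 (fun j => X j) i) ∘ Fin.castSucc) = X := by
    funext j; simp [Fin.lastCases_castSucc]
  rw [this]
  exact aeval_X_left_apply P

private lemma killLast_X_last (m : ℕ) :
    killLast (K := K) m (X (Fin.last m)) = 0 := by
  rw [killLast, aeval_X]; simp [Fin.lastCases_last]

private lemma killLast_X_castSucc (m : ℕ) (j : Fin m) :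
    killLast (K := K) m (X (Fin.castSucc j)) = X j := by
  rw [killLast, aeval_X]; simp [Fin.lastCases_castSucc]

private lemma sub_killLast_dvd (m : ℕ) (P : MvPolynomial (Fin (m+1)) K) :
    ∃ q, P - rename Fin.castSucc (killLast m P) = X (Fin.last m) * q := by
  induction P using MvPolynomial.induction_on with
  | C a => exact ⟨0, by simp⟩
  | add P Q hP hQ =>
      obtain ⟨q1, h1⟩ := hP; obtain ⟨q2, h2⟩ := hQ
      exact ⟨q1 + q2, by rw [map_add, map_add]; linear_combination h1 + h2⟩
  | mul_X P i hP =>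
      obtain ⟨q, h⟩ := hP
      rcases Fin.lastCases (motive := fun i => i = Fin.last m ∨ ∃ i0, i = Fin.castSucc i0)
        (Or.inl rfl) (fun i0 => Or.inr ⟨i0, rfl⟩) i with hi | ⟨i0, hi⟩
      · subst hi
        refine ⟨P, ?_⟩
        rw [map_mul, killLast_X_last, mul_zero, map_zero, sub_zero, mul_comm]
      · subst hi
        refine ⟨q * X (Fin.castSucc i0), ?_⟩
        rw [map_mul, killLast_X_castSucc, map_mul, rename_X]
        linear_combination X (Fin.castSucc i0) * h

private theorem syzygy_skew : ∀ (m : ℕ) (f : Fin m → MvPolynomial (Fin m) K),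
    (∑ j, f j * X j) = 0 →
    ∃ E : Fin m → Fin m → MvPolynomial (Fin m) K,
      (∀ a b, E a b + E b a = 0) ∧ (∀ a, E a a = 0) ∧ (∀ a, f a = ∑ b, E a b * X b) := by
  intro m
  induction m with
  | zero =>
      intro f _
      exact ⟨fun a => a.elim0, fun a => a.elim0, fun a => a.elim0, fun a => a.elim0⟩
  | succ m ih =>
      intro f hf
      set l := Fin.last m with hl
      set ι : MvPolynomial (Fin m) K →ₐ[K] MvPolynomial (Fin (m+1)) K :=
        rename Fin.castSucc with hι
      set fb : Fin m → MvPolynomial (Fin m) K :=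
        fun j => killLast m (f (Fin.castSucc j)) with hfb
      have hrel : ∑ j, fb j * X j = 0 := by
        have h0 := congrArg (killLast (K := K) m) hf
        rw [map_sum, map_zero] at h0
        rw [Fin.sum_univ_castSucc] at h0
        simp only [map_mul, killLast_X_last, killLast_X_castSucc, mul_zero, add_zero] at h0
        exact h0
      obtain ⟨Eb, hbs, hbd, hbrow⟩ := ih fb hrel
      choose q hq using fun j : Fin m => sub_killLast_dvd m (f (Fin.castSucc j))
      have hq' : ∀ j, f (Fin.castSucc j) = ι (fb j) + X l * q j := by
        intro j
        have := hq j
        rw [hfb]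
        linear_combination this
      have hι0 : ∑ j : Fin m, ι (fb j) * X (Fin.castSucc j) = 0 := by
        have := congrArg ι hrel
        rw [map_sum, map_zero] at this
        simpa only [map_mul, hι, rename_X] using this
      have hlast : f l = - ∑ j : Fin m, q j * X (Fin.castSucc j) := by
        have h1 : (∑ j : Fin m, f (Fin.castSucc j) * X (Fin.castSucc j)) + f l * X l = 0 := by
          rw [← Fin.sum_univ_castSucc (f := fun i => f i * X i)]
          exact hf
        have h2 : X l * ((∑ j : Fin m, q j * X (Fin.castSucc j)) + f l) = 0 := by
          rw [Finset.sum_congr rfl (fun j _ => congrArg (· * X (Fin.castSucc j)) (hq' j))] at h1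
          simp only [add_mul] at h1
          rw [Finset.sum_add_distrib, hι0, zero_add] at h1
          rw [mul_add, Finset.mul_sum]
          rw [← h1]
          congr 1
          · exact Finset.sum_congr rfl (fun j _ => by ring)
          · ring
        have h3 : (∑ j : Fin m, q j * X (Fin.castSucc j)) + f l = 0 := by
          rcases mul_eq_zero.mp h2 with h | h
          · exact absurd h (X_ne_zero l)
          · exact h
        linear_combination h3
      refine ⟨fun a b => Fin.lastCases
          (Fin.lastCases 0 (fun k0 => - q k0) b)
          (fun j0 => Fin.lastCases (q j0) (fun k0 => ι (Eb j0 k0)) b) a, ?_, ?_, ?_⟩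
      · intro a b
        induction a using Fin.lastCases with
        | last =>
            induction b using Fin.lastCases with
            | last => simp [Fin.lastCases_last]
            | cast k0 => simp [Fin.lastCases_last, Fin.lastCases_castSucc]
        | cast j0 =>
            induction b using Fin.lastCases with
            | last => simp [Fin.lastCases_last, Fin.lastCases_castSucc]
            | cast k0 =>
                simp only [Fin.lastCases_castSucc]
                rw [← map_add, hbs j0 k0, map_zero]
      · intro a
        induction a using Fin.lastCases with
        | last => simp [Fin.lastCases_last]
        | cast j0 => simp only [Fin.lastCases_castSucc]; rw [hbd j0, map_zero]
      · intro a
        induction a using Fin.lastCases with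
        | last =>
            simp only [Fin.lastCases_last]
            rw [Fin.sum_univ_castSucc]
            simp only [Fin.lastCases_last, Fin.lastCases_castSucc]
            rw [hlast]
            simp [Finset.sum_neg_distrib]
        | cast j0 =>
            simp only [Fin.lastCases_castSucc]
            rw [Fin.sum_univ_castSucc]
            simp only [Fin.lastCases_last, Fin.lastCases_castSucc]
            rw [hq' j0, hbrow j0, map_sum]
            simp only [map_mul, hι, rename_X]
            ring

end Syzygy

open Matrix in

/-- in characteristic `p > 0`, with `z_0 = det N` where
`(g_1,…,g_m)^T = N·(x_1,…,x_m)^T`,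
`g_1^{p-1}⋯g_m^{p-1}·z_0 − x_1^{p-1}⋯x_m^{p-1}·z_0^p ∈ (g_1^p,…,g_m^p)`. -/
theorem key_ideal_membership {k : Type*} [Field k] {p : ℕ} [CharP k p]
    (hp : 0 < p) {m : ℕ}
    (g : Fin m → MvPolynomial (Fin m) k) (d : Fin m → ℕ)
    (hhom : ∀ i, (g i).IsHomogeneous (d i)) (hd : ∀ i, 0 < d i)
    (hreg : RingTheory.Sequence.IsRegular (MvPolynomial (Fin m) k) (List.ofFn g))
    (hart : IsArtinianRing (MvPolynomial (Fin m) k ⧸ Ideal.span (Set.range g)))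
    (N : Matrix (Fin m) (Fin m) (MvPolynomial (Fin m) k))
    (hN : ∀ i, g i = ∑ j, N i j * X j) :
    (∏ i, g i ^ (p - 1)) * N.det - (∏ i, (X i : MvPolynomial (Fin m) k) ^ (p - 1)) * N.det ^ p
      ∈ Ideal.span (Set.range fun i => g i ^ p) := by
  classical
  haveI : NeZero p := ⟨hp.ne'⟩
  have hprime : p.Prime := (CharP.char_is_prime_of_pos k p).1
  haveI := Fact.mk hprime
  haveI : ExpChar (MvPolynomial (Fin m) k) p := by infer_instance
  set I : Ideal (MvPolynomial (Fin m) k) := Ideal.span (Set.range fun i => g i ^ p) with hI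
  set B : Matrix (Fin m) (Fin m) (MvPolynomial (Fin m) k) :=
    Matrix.of (fun i j => g i ^ (p - 1) * N i j) with hB
  set C : Matrix (Fin m) (Fin m) (MvPolynomial (Fin m) k) :=
    Matrix.of (fun i j => N i j ^ p * X j ^ (p - 1)) with hC
  -- determinant computations
  have hdetB : B.det = (∏ i, g i ^ (p - 1)) * N.det :=
    Matrix.det_mul_column (fun i => g i ^ (p - 1)) N
  have hdetC : C.det = (∏ i, (X i : MvPolynomial (Fin m) k) ^ (p - 1)) * N.det ^ p := by
    have hCeq : C = Matrix.of (fun i j => (X j : MvPolynomial (Fin m) k) ^ (p - 1)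
        * (N.map fun a => a ^ p) i j) := by
      ext i j; simp only [hC, Matrix.of_apply, Matrix.map_apply]; ring_nf
    have hfr : (N.map fun a => a ^ p).det = N.det ^ p := by
      have h1 := RingHom.map_det (frobenius (MvPolynomial (Fin m) k) p) N
      rw [RingHom.mapMatrix_apply] at h1
      have h2 : N.map ⇑(frobenius (MvPolynomial (Fin m) k) p) = N.map (fun a => a ^ p) := by
        ext i j; simp [Matrix.map_apply, frobenius_def]
      rw [h2] at h1
      rw [← h1, frobenius_def]
    rw [hCeq, Matrix.det_mul_row, hfr]
  -- row sums
  have hrowB : ∀ i, ∑ j, B i j * X j = g i ^ p := by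
    intro i
    have h : ∑ j, B i j * X j = g i ^ (p - 1) * ∑ j, N i j * X j := by
      rw [Finset.mul_sum]
      exact Finset.sum_congr rfl (fun j _ => by simp only [hB, Matrix.of_apply]; ring)
    rw [h, ← hN i, ← pow_succ]
    congr 1
    omega
  have hrowC : ∀ i, ∑ j, C i j * X j = g i ^ p := by
    intro i
    have h1 : ∑ j, C i j * X j = ∑ j, (N i j * X j) ^ p := by
      refine Finset.sum_congr rfl (fun j _ => ?_)
      rw [mul_pow]
      simp only [hC, Matrix.of_apply]
      have h : (X j : MvPolynomial (Fin m) k) ^ (p - 1) * X j = X j ^ p := by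
        rw [← pow_succ]
        congr 1
        omega
      calc N i j ^ p * X j ^ (p - 1) * X j = N i j ^ p * (X j ^ (p - 1) * X j) := by ring
        _ = N i j ^ p * X j ^ p := by rw [h]
    rw [h1, ← sum_pow_char, ← hN i]
  -- pass to quotient
  rw [show (∏ i, g i ^ (p - 1)) * N.det
        - (∏ i, (X i : MvPolynomial (Fin m) k) ^ (p - 1)) * N.det ^ p
      = B.det - C.det by rw [hdetB, hdetC]]
  rw [← Ideal.Quotient.eq]
  set π : MvPolynomial (Fin m) k →+* MvPolynomial (Fin m) k ⧸ I := Ideal.Quotient.mk I with hπ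
  have hmemzero : ∀ i : Fin m, π (g i ^ p) = 0 := by
    intro i
    rw [hπ, Ideal.Quotient.eq_zero_iff_mem]
    exact Ideal.subset_span ⟨i, rfl⟩
  have hmapdet : ∀ M : Matrix (Fin m) (Fin m) (MvPolynomial (Fin m) k),
      π M.det = (M.map π).det := by
    intro M
    rw [RingHom.map_det, RingHom.mapMatrix_apply]
  rw [hmapdet, hmapdet]
  have hvec : ∀ M : Matrix (Fin m) (Fin m) (MvPolynomial (Fin m) k),
      (∀ i, ∑ j, M i j * X j = g i ^ p) → (M.map π) *ᵥ (fun j => π (X j)) = 0 := by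
    intro M hM
    funext i
    show ∑ j, (M.map π) i j * π (X j) = 0
    simp only [Matrix.map_apply, ← _root_.map_mul]
    rw [← _root_.map_sum, hM i, hmemzero i]
  refine det_eq_det_of_rows_syzygy (B.map π) (C.map π) (fun j => π (X j))
    (hvec B hrowB) (hvec C hrowC) ?_
  intro i
  have hD : ∑ j, (fun j => B i j - C i j) j * X j = 0 := by
    simp only [sub_mul]
    rw [Finset.sum_sub_distrib, hrowB i, hrowC i, sub_self]
  obtain ⟨E, hs, hdg, hrow⟩ := syzygy_skew m (fun j => B i j - C i j) hD
  refine ⟨Matrix.of (fun a b => π (E a b)), ?_, ?_, ?_⟩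
  · intro a b
    show π (E a b) + π (E b a) = 0
    rw [← _root_.map_add, hs a b, _root_.map_zero]
  · intro a
    show π (E a a) = 0
    rw [hdg a, _root_.map_zero]
  · intro j
    show (B.map π) i j - (C.map π) i j = ∑ b, π (E j b) * π (X b)
    simp only [Matrix.map_apply, ← _root_.map_mul]
    rw [← _root_.map_sum, ← hrow j, _root_.map_sub]
end

section
/- Let k be a field of characteristic p > 0 and R = k[x_1,...,x_m]. If g is homogeneous of degree d, s ≥ d, and φ : R_s → k is a k-linear map vanishing on the degree-s part of the ideal (g), then for every homogeneous v ∈ R of degree m(p−1) + sp − dp, the sum over all degree-s monic monomials u of ((x_1^{p−1}···x_m^{p−1}·u^p) ∘ (g^p·v)) · φ(u)^p equals 0. -/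
open MvPolynomial

/-- The symmetric bilinear form on each graded piece of `k[x_1,…,x_m]` making the
monic monomials an orthonormal basis (extended to all polynomials). -/
noncomputable def contract {k : Type*} [CommSemiring k] {m : ℕ}
    (u w : MvPolynomial (Fin m) k) : k :=
  ∑ d ∈ u.support, u.coeff d * w.coeff d

private lemma sum_univ_eq_degree {m : ℕ} (b : Fin m →₀ ℕ) : ∑ i, b i = b.degree :=
  (Finset.sum_subset (Finset.subset_univ _) fun i _ hi =>
    Finsupp.notMem_support_iff.mp hi).symm

private lemma contract_monomial {k : Type*} [CommSemiring k] [Nontrivial k] {m : ℕ}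
    (a : Fin m →₀ ℕ) (w : MvPolynomial (Fin m) k) :
    contract (monomial a (1 : k)) w = w.coeff a := by
  classical
  unfold contract
  rw [support_monomial, if_neg (one_ne_zero (α := k))]
  rw [Finset.sum_singleton, coeff_monomial, if_pos rfl, one_mul]

/-- if `φ` is a linear functional vanishing on the degree-`s` part
of `(g)` (with `g` homogeneous of degree `d ≤ s`), then for every homogeneous
`v` of degree `m(p−1) + sp − dp`,
`∑_{u ∈ M_s} ((x_1^{p−1}⋯x_m^{p−1}·u^p) ∘ (g^p·v))·φ(u)^p = 0`. -/
theorem vanish_lemma {k : Type*} [Field k] {p : ℕ} [CharP k p] (hp : 0 < p)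
    {m : ℕ} (g : MvPolynomial (Fin m) k) {d s : ℕ}
    (hg : g.IsHomogeneous d) (hds : d ≤ s)
    (φ : MvPolynomial (Fin m) k →ₗ[k] k)
    (hφ : ∀ w : MvPolynomial (Fin m) k,
      w.IsHomogeneous s → w ∈ Ideal.span {g} → φ w = 0)
    (v : MvPolynomial (Fin m) k)
    (hv : v.IsHomogeneous (m * (p - 1) + (s - d) * p)) :
    ∑ r ∈ Finset.Nat.antidiagonalTuple m s,
      contract ((∏ i, (X i : MvPolynomial (Fin m) k) ^ (p - 1)) *
          (monomial (Finsupp.equivFunOnFinite.symm r) (1 : k)) ^ p)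
        (g ^ p * v) *
        (φ (monomial (Finsupp.equivFunOnFinite.symm r) (1 : k))) ^ p = 0 := by
  classical
  have hprime : p.Prime := by
    rcases CharP.char_is_prime_or_zero k p with h | h
    · exact h
    · omega
  haveI : Fact p.Prime := ⟨hprime⟩
  haveI : ExpChar k p := .prime hprime
  haveI : ExpChar (MvPolynomial (Fin m) k) p := .prime hprime
  set e : Fin m →₀ ℕ := Finsupp.equivFunOnFinite.symm (fun _ => p - 1) with he
  have heapp : ∀ i, e i = p - 1 := fun i => rfl
  -- the pointwise divisibility condition
  have hcond : ∀ b u : Fin m →₀ ℕ, p • b ≤ e + p • u ↔ b ≤ u := by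
    intro b u
    constructor
    · intro h i
      have h2 := Finsupp.le_def.mp h i
      simp only [Finsupp.add_apply, Finsupp.smul_apply, smul_eq_mul, heapp] at h2
      by_contra hc
      push_neg at hc
      have h3 : p * (u i + 1) ≤ p * b i := Nat.mul_le_mul_left p hc
      rw [Nat.mul_add, Nat.mul_one] at h3
      omega
    · intro h
      rw [Finsupp.le_def]
      intro i
      have h2 := Nat.mul_le_mul_left p (Finsupp.le_def.mp h i)
      simp only [Finsupp.add_apply, Finsupp.smul_apply, smul_eq_mul, heapp]
      omega
  have hsub : ∀ b u : Fin m →₀ ℕ, b ≤ u → e + p • u - p • b = e + p • (u - b) := by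
    intro b u h
    ext i
    have hbi : b i ≤ u i := Finsupp.le_def.mp h i
    have h2 := Nat.mul_le_mul_left p hbi
    simp only [Finsupp.tsub_apply, Finsupp.add_apply, Finsupp.smul_apply, smul_eq_mul, heapp]
    rw [Nat.mul_sub]
    omega
  -- the Frobenius expansion of `g ^ p`
  have hgp : g ^ p = ∑ b ∈ g.support, monomial (p • b) (g.coeff b ^ p) := by
    conv_lhs => rw [g.as_sum]
    rw [sum_pow_char]
    refine Finset.sum_congr rfl fun b _ => ?_
    rw [monomial_pow]
  have hdeg : ∀ b ∈ g.support, ∑ i, b i = d := by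
    intro b hb
    rw [sum_univ_eq_degree, Finsupp.degree_eq_weight_one]
    exact hg (mem_support_iff.mp hb)
  -- the product of the variables as a monomial
  have hX : (∏ i, (X i : MvPolynomial (Fin m) k) ^ (p - 1)) = monomial e (1 : k) := by
    have hsupp : e.support = Finset.univ := by
      ext i
      simp only [Finsupp.mem_support_iff, heapp, Finset.mem_univ, iff_true]
      have := hprime.two_le
      omega
    rw [← prod_X_pow_eq_monomial, hsupp]
    refine Finset.prod_congr rfl fun i _ => ?_
    rw [heapp]
  -- Step 1: rewrite each term of the sum
  have step1 : ∀ r ∈ Finset.Nat.antidiagonalTuple m s,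
      contract ((∏ i, (X i : MvPolynomial (Fin m) k) ^ (p - 1)) *
          (monomial (Finsupp.equivFunOnFinite.symm r) (1 : k)) ^ p) (g ^ p * v) *
        (φ (monomial (Finsupp.equivFunOnFinite.symm r) (1 : k))) ^ p
      = ∑ b ∈ g.support, (if b ≤ Finsupp.equivFunOnFinite.symm r then
          g.coeff b ^ p * v.coeff (e + p • (Finsupp.equivFunOnFinite.symm r - b)) *
            (φ (monomial (b + (Finsupp.equivFunOnFinite.symm r - b)) (1 : k))) ^ p
        else 0) := by
    intro r _
    set u : Fin m →₀ ℕ := Finsupp.equivFunOnFinite.symm r with hu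
    rw [hX, monomial_pow, one_pow, monomial_mul, mul_one, contract_monomial]
    rw [hgp, Finset.sum_mul, coeff_sum, Finset.sum_mul]
    refine Finset.sum_congr rfl fun b hb => ?_
    rw [coeff_monomial_mul']
    by_cases hle : b ≤ u
    · rw [if_pos ((hcond b u).mpr hle), if_pos hle, hsub b u hle,
        add_tsub_cancel_of_le hle]
    · rw [if_neg (fun h => hle ((hcond b u).mp h)), if_neg hle, zero_mul]
  rw [Finset.sum_congr rfl step1, Finset.sum_comm]
  -- Step 2: reindex the inner sum
  have key : ∀ b ∈ g.support,
      (∑ r ∈ Finset.Nat.antidiagonalTuple m s,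
        if b ≤ Finsupp.equivFunOnFinite.symm r then
          g.coeff b ^ p * v.coeff (e + p • (Finsupp.equivFunOnFinite.symm r - b)) *
            (φ (monomial (b + (Finsupp.equivFunOnFinite.symm r - b)) (1 : k))) ^ p
        else 0)
      = ∑ w ∈ Finset.Nat.antidiagonalTuple m (s - d),
          g.coeff b ^ p * v.coeff (e + p • Finsupp.equivFunOnFinite.symm w) *
            (φ (monomial (b + Finsupp.equivFunOnFinite.symm w) (1 : k))) ^ p := by
    intro b hb
    have hbd : ∑ i, b i = d := hdeg b hb
    rw [← Finset.sum_filter]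
    refine Finset.sum_nbij' (fun r => (r - ⇑b : Fin m → ℕ))
      (fun w => (w + ⇑b : Fin m → ℕ)) ?_ ?_ ?_ ?_ ?_
    · intro r hr
      rw [Finset.mem_filter] at hr
      obtain ⟨hr1, hr2⟩ := hr
      rw [Finset.Nat.mem_antidiagonalTuple] at hr1 ⊢
      have hple : ∀ i, b i ≤ r i := fun i => Finsupp.le_def.mp hr2 i
      simp only [Pi.sub_apply]
      rw [Finset.sum_tsub_distrib _ (fun i _ => hple i)]
      rw [hr1, hbd]
    · intro w hw
      rw [Finset.mem_filter]
      rw [Finset.Nat.mem_antidiagonalTuple] at hw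
      constructor
      · rw [Finset.Nat.mem_antidiagonalTuple]
        simp only [Pi.add_apply]
        rw [Finset.sum_add_distrib, hw, hbd, Nat.sub_add_cancel hds]
      · rw [Finsupp.le_def]
        intro i
        simp only [Finsupp.coe_equivFunOnFinite_symm, Pi.add_apply]
        omega
    · intro r hr
      rw [Finset.mem_filter] at hr
      funext i
      simp only [Pi.add_apply, Pi.sub_apply]
      have := Finsupp.le_def.mp hr.2 i
      simp only [Finsupp.coe_equivFunOnFinite_symm] at this
      omega
    · intro w hw
      funext i
      simp only [Pi.add_apply, Pi.sub_apply]
      omega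
    · intro r hr
      rw [Finset.mem_filter] at hr
      have hds' : Finsupp.equivFunOnFinite.symm r - b
          = Finsupp.equivFunOnFinite.symm (r - ⇑b : Fin m → ℕ) := by
        ext i
        simp only [Finsupp.tsub_apply, Finsupp.coe_equivFunOnFinite_symm, Pi.sub_apply]
      rw [hds']
  rw [Finset.sum_congr rfl key, Finset.sum_comm]
  -- Step 3: each inner sum vanishes
  refine Finset.sum_eq_zero fun w hw => ?_
  set ww : Fin m →₀ ℕ := Finsupp.equivFunOnFinite.symm w with hww
  have hwsum : ww.degree = s - d := by
    rw [← sum_univ_eq_degree]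
    have := Finset.Nat.mem_antidiagonalTuple.mp hw
    simpa [hww] using this
  have hmul : g * monomial ww (1 : k) = ∑ b ∈ g.support, g.coeff b • monomial (b + ww) (1 : k) := by
    conv_lhs => rw [g.as_sum]
    rw [Finset.sum_mul]
    refine Finset.sum_congr rfl fun b _ => ?_
    rw [monomial_mul, mul_one, smul_monomial, smul_eq_mul, mul_one]
  have hphi : φ (g * monomial ww (1 : k)) = 0 := by
    apply hφ
    · have h1 : (monomial ww (1 : k)).IsHomogeneous (s - d) := isHomogeneous_monomial _ hwsum
      have h2 := hg.mul h1
      rwa [Nat.add_sub_cancel' hds] at h2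
    · exact Ideal.mem_span_singleton'.mpr ⟨monomial ww 1, mul_comm _ g⟩
  have hphi2 : ∑ b ∈ g.support, g.coeff b * φ (monomial (b + ww) (1 : k)) = 0 := by
    rw [← hphi, hmul, map_sum]
    refine Finset.sum_congr rfl fun b _ => ?_
    rw [map_smul, smul_eq_mul]
  calc ∑ b ∈ g.support,
        g.coeff b ^ p * v.coeff (e + p • ww) * (φ (monomial (b + ww) (1 : k))) ^ p
      = ∑ b ∈ g.support,
        v.coeff (e + p • ww) * (g.coeff b * φ (monomial (b + ww) (1 : k))) ^ p := by
        refine Finset.sum_congr rfl fun b _ => ?_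
        rw [mul_pow]
        ring
    _ = v.coeff (e + p • ww) *
        (∑ b ∈ g.support, g.coeff b * φ (monomial (b + ww) (1 : k))) ^ p := by
        rw [← Finset.mul_sum, sum_pow_char]
    _ = 0 := by rw [hphi2, zero_pow hp.ne', mul_zero]
end
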